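/- Let K be a field and K ⊆ A a finite-dimensional étale K-algebra (i.e., A is a finite product of finite separable field extensions of K). Then the set [K,A] of intermediate K-subalgebras of A is finite and A has only finitely many ideals. -/

import Mathlib

universe u
open Module
namespace EtaleFIP
variable {K : Type u} [Field K]

lemma single_mul_single_same {ι : Type u} [DecidableEq ι] (R : ι → Type u) [∀ i, CommRing (R i)]
    (i : ι) (x y : R i) :
    (Pi.single i (x*y) : ∀ i, R i) = Pi.single i x * Pi.single i y := by
  funext j
  obtain rfl | h := eq_or_ne j i
  · simp
  · simp [Pi.single_eq_of_ne h]

lemma single_mul_single_ne {ι : Type u} [DecidableEq ι] (R : ι → Type u) [∀ i, CommRing (R i)]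
    (i j : ι) (h : i ≠ j) (x : R i) (y : R j) :
    (Pi.single i x * Pi.single j y : ∀ i, R i) = 0 := by
  funext k
  obtain rfl | hk := eq_or_ne k i
  · simp [Pi.single_eq_of_ne h]
  · simp [Pi.single_eq_of_ne hk]

variable {ι : Type u} [Fintype ι] [DecidableEq ι] (R : ι → Type u) [∀ i, CommRing (R i)]
  [∀ i, Algebra K (R i)] (D : Type u) [CommRing D] [IsDomain D] [Algebra K D]

/-- the component algebra hom induced by an algebra hom out of a finite product. -/
def compSingle (φ : (∀ i, R i) →ₐ[K] D) (i : ι) (h1 : φ (Pi.single i 1) = 1) :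
    R i →ₐ[K] D where
  toFun x := φ (Pi.single i x)
  map_one' := h1
  map_mul' x y := by
    show φ (Pi.single i (x * y)) = φ (Pi.single i x) * φ (Pi.single i y)
    rw [single_mul_single_same, map_mul]
  map_zero' := by
    show φ (Pi.single i (0 : R i)) = 0
    rw [Pi.single_zero, map_zero]
  map_add' x y := by
    show φ (Pi.single i (x + y)) = φ (Pi.single i x) + φ (Pi.single i y)
    rw [Pi.single_add, map_add]
  commutes' k := by
    show φ (Pi.single i (algebraMap K (R i) k)) = algebraMap K D k
    have key : (Pi.single i (algebraMap K (R i) k) : ∀ i, R i)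
        = algebraMap K (∀ i, R i) k * Pi.single i 1 := by
      funext j
      obtain rfl | h := eq_or_ne j i
      · simp
      · simp [Pi.single_eq_of_ne h]
    rw [key, map_mul, AlgHom.commutes, h1, mul_one]

lemma idem_cases (φ : (∀ i, R i) →ₐ[K] D) (i : ι) :
    φ (Pi.single i 1) = 0 ∨ φ (Pi.single i 1) = 1 := by
  have : IsIdempotentElem (φ (Pi.single i 1)) := by
    unfold IsIdempotentElem
    rw [← map_mul, ← single_mul_single_same, mul_one]
  exact IsIdempotentElem.iff_eq_zero_or_one.mp this

lemma exists_unique_single_one (φ : (∀ i, R i) →ₐ[K] D) :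
    ∃! i : ι, φ (Pi.single i 1) = 1 := by
  have hone : (∑ j, Pi.single j (1 : R j)) = (1 : ∀ i, R i) := by
    have h := Finset.univ_sum_single (1 : ∀ i, R i)
    simpa using h
  have hsum : ∑ i, φ (Pi.single i 1) = 1 := by
    rw [← map_sum, hone, map_one]
  have hex : ∃ i, φ (Pi.single i 1) = 1 := by
    by_contra hc
    push_neg at hc
    have h0 : ∀ i ∈ Finset.univ, φ (Pi.single i 1) = (0 : D) := fun i _ =>
      (idem_cases R D φ i).resolve_right (hc i)
    rw [Finset.sum_eq_zero h0] at hsum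
    exact zero_ne_one hsum
  obtain ⟨i, hi⟩ := hex
  refine ⟨i, hi, fun j hj => ?_⟩
  by_contra hne
  have hj' : φ (Pi.single j 1) = 1 := hj
  have hz := single_mul_single_ne R j i hne (1 : R j) (1 : R i)
  have h2 : φ (Pi.single j 1 * Pi.single i 1) = φ (Pi.single j 1) * φ (Pi.single i 1) :=
    map_mul φ _ _
  rw [hz, map_zero, hj', hi, mul_one] at h2
  exact one_ne_zero h2.symm

lemma single_eq_zero_of_ne (φ : (∀ i, R i) →ₐ[K] D) {i j : ι}
    (hi : φ (Pi.single i 1) = 1) (hne : j ≠ i) : φ (Pi.single j 1) = 0 := by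
  rcases idem_cases R D φ j with h | h
  · exact h
  · exact absurd ((exists_unique_single_one R D φ).unique h hi) hne

lemma comp_eval_eq (φ : (∀ i, R i) →ₐ[K] D) {i : ι} (hi : φ (Pi.single i 1) = 1) :
    ((compSingle R D φ i hi).comp (Pi.evalAlgHom K R i)) = φ := by
  ext x
  show φ (Pi.single i (x i)) = φ x
  have hx : x = ∑ j, Pi.single j (x j) := (Finset.univ_sum_single x).symm
  have hterm : ∀ j ∈ Finset.univ, j ≠ i → φ (Pi.single j (x j)) = 0 := by
    intro j _ hne
    have hdecomp : (Pi.single j (x j) : ∀ i, R i) = Pi.single j (x j) * Pi.single j 1 := by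
      rw [← single_mul_single_same, mul_one]
    rw [hdecomp, map_mul, single_eq_zero_of_ne R D φ hi hne, mul_zero]
  calc φ (Pi.single i (x i)) = ∑ j, φ (Pi.single j (x j)) := by
        rw [Finset.sum_eq_single_of_mem i (Finset.mem_univ i) hterm]
    _ = φ x := by rw [← map_sum, ← hx]

lemma invFun_bijective : Function.Bijective
    (fun p : (Σ i : ι, (R i →ₐ[K] D)) => p.2.comp (Pi.evalAlgHom K R p.1)) := by
  constructor
  · rintro ⟨i, ψ⟩ ⟨j, χ⟩ h
    simp only at h
    have hij : i = j := by
      by_contra hne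
      have h1 : (ψ.comp (Pi.evalAlgHom K R i)) (Pi.single i 1) = 1 := by
        show ψ (Pi.single i 1 i) = 1
        rw [Pi.single_eq_same, map_one]
      have h2 : (χ.comp (Pi.evalAlgHom K R j)) (Pi.single i 1) = 0 := by
        show χ (Pi.single i 1 j) = 0
        rw [Pi.single_eq_of_ne (Ne.symm hne), map_zero]
      rw [h] at h1
      rw [h1] at h2
      exact zero_ne_one (α := D) h2.symm
    subst hij
    have hψχ : ψ = χ := by
      ext x
      have := congrArg (fun f : (∀ i, R i) →ₐ[K] D => f (Pi.single i x)) h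
      simpa using this
    rw [hψχ]
  · intro φ
    obtain ⟨i, hi, -⟩ := exists_unique_single_one R D φ
    exact ⟨⟨i, compSingle R D φ i hi⟩, comp_eval_eq R D φ hi⟩

/-- classification of algebra homs out of a finite product into a domain -/
noncomputable def algHomPiEquivSigma :
    ((∀ i, R i) →ₐ[K] D) ≃ Σ i : ι, (R i →ₐ[K] D) :=
  (Equiv.ofBijective _ (invFun_bijective R D)).symm


section Card

variable (K : Type u) [Field K]

/-- The residue fields of maximal ideals. -/
noncomputable instance fieldQuot (C : Type u) [CommRing C]
    (I : {I : Ideal C | I.IsMaximal}) : Field (C ⧸ I.1) :=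
  have : I.1.IsMaximal := I.2
  Ideal.Quotient.field I.1

lemma finiteDimensional_quot (C : Type u) [CommRing C] [Algebra K C] [FiniteDimensional K C]
    (I : Ideal C) : FiniteDimensional K (C ⧸ I) :=
  Module.Finite.of_surjective (Ideal.Quotient.mkₐ K I).toLinearMap Ideal.Quotient.mk_surjective

/-- The artinian decomposition as an algebra equivalence. -/
noncomputable def piAlgEquiv (C : Type u) [CommRing C] [Algebra K C] [FiniteDimensional K C]
    [IsReduced C] :
    letI := IsArtinianRing.of_finite K C
    C ≃ₐ[K] ∀ I : {I : Ideal C | I.IsMaximal}, C ⧸ I.1 := by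
  letI := IsArtinianRing.of_finite K C
  exact AlgEquiv.ofRingEquiv (f := (IsArtinianRing.equivPi C).toRingEquiv.trans
    (RingEquiv.piCongrLeft (fun I : {I : Ideal C | I.IsMaximal} => C ⧸ I.1)
      (⟨fun m => ⟨m.asIdeal, m.isMaximal⟩, fun I => ⟨I.1, I.2⟩, fun _ => rfl, fun _ => rfl⟩ :
        MaximalSpectrum C ≃ {I : Ideal C | I.IsMaximal}))) (fun k => by funext I; rfl)

lemma piAlgEquiv_apply (C : Type u) [CommRing C] [Algebra K C] [FiniteDimensional K C]
    [IsReduced C] (x : C) (I : {I : Ideal C | I.IsMaximal}) :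
    piAlgEquiv K C x I = Ideal.Quotient.mk I.1 x := rfl

lemma isSeparable_quot (C : Type u) [CommRing C] [Algebra K C] [FiniteDimensional K C]
    (hsep : ∀ c : C, (minpoly K c).Separable) (I : Ideal C) [I.IsMaximal] :
    Algebra.IsSeparable K (C ⧸ I) := by
  constructor
  intro x
  obtain ⟨c, rfl⟩ := Ideal.Quotient.mk_surjective (I := I) x
  have hdvd : minpoly K (Ideal.Quotient.mk I c) ∣ minpoly K c := by
    apply minpoly.dvd
    have : (Ideal.Quotient.mkₐ K I) c = Ideal.Quotient.mk I c := rfl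
    rw [← this, Polynomial.aeval_algHom_apply, minpoly.aeval, map_zero]
  exact (hsep c).of_dvd hdvd

/-- Counting algebra homs into the algebraic closure for a reduced finite-dimensional
algebra all of whose elements are separable. -/
lemma card_algHom_eq_finrank (C : Type u) [CommRing C] [Algebra K C]
    [FiniteDimensional K C] [IsReduced C] (hsep : ∀ c : C, (minpoly K c).Separable) :
    Nat.card (C →ₐ[K] AlgebraicClosure K) = finrank K C := by
  classical
  letI := IsArtinianRing.of_finite K C
  haveI : Finite {I : Ideal C | I.IsMaximal} := (IsArtinianRing.setOfPred_isMaximal_finite C).to_subtype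
  letI : Fintype {I : Ideal C | I.IsMaximal} := Fintype.ofFinite _
  haveI hFD : ∀ I : {I : Ideal C | I.IsMaximal}, FiniteDimensional K (C ⧸ I.1) :=
    fun I => finiteDimensional_quot K C I.1
  haveI hSep : ∀ I : {I : Ideal C | I.IsMaximal}, Algebra.IsSeparable K (C ⧸ I.1) := fun I =>
    have : I.1.IsMaximal := I.2
    isSeparable_quot K C hsep I.1
  have e1 : (C →ₐ[K] AlgebraicClosure K) ≃
      ((∀ I : {I : Ideal C | I.IsMaximal}, C ⧸ I.1) →ₐ[K] AlgebraicClosure K) :=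
    AlgEquiv.arrowCongr (piAlgEquiv K C) AlgEquiv.refl
  have e2 := algHomPiEquivSigma (K := K) (fun I : {I : Ideal C | I.IsMaximal} => C ⧸ I.1)
    (AlgebraicClosure K)
  haveI : ∀ I : {I : Ideal C | I.IsMaximal}, Fintype ((C ⧸ I.1) →ₐ[K] AlgebraicClosure K) :=
    fun I => minpoly.AlgHom.fintype _ _ _
  have hfield : ∀ I : {I : Ideal C | I.IsMaximal},
      Nat.card ((C ⧸ I.1) →ₐ[K] AlgebraicClosure K) = finrank K (C ⧸ I.1) := fun I => by
    rw [← Field.finSepDegree_eq_of_isAlgClosed,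
      Field.finSepDegree_eq_finrank_of_isSeparable]
  rw [Nat.card_congr (e1.trans e2)]
  rw [Nat.card_eq_fintype_card, Fintype.card_sigma]
  have : ∀ I : {I : Ideal C | I.IsMaximal},
      Fintype.card ((C ⧸ I.1) →ₐ[K] AlgebraicClosure K) = finrank K (C ⧸ I.1) := fun I => by
    rw [← Nat.card_eq_fintype_card, hfield I]
  rw [Finset.sum_congr rfl fun I _ => this I]
  rw [← Module.finrank_pi_fintype K]
  exact ((piAlgEquiv K C).toLinearEquiv.finrank_eq).symm

end Card


section Ext

variable (K : Type u) [Field K]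

set_option maxHeartbeats 1000000 in
lemma exists_extension (A : Type u) [CommRing A] [Algebra K A] [FiniteDimensional K A]
    (C : Subalgebra K A) (φ : C →ₐ[K] AlgebraicClosure K) :
    ∃ Φ : A →ₐ[K] AlgebraicClosure K, Φ.comp C.val = φ := by
  have hrangefield : IsField φ.range := Subalgebra.isField_of_algebraic (K := K) (L := AlgebraicClosure K) φ.range
  letI : Field φ.range := hrangefield.toField
  have hsurj : Function.Surjective φ.rangeRestrict := φ.rangeRestrict_surjective
  set m : Ideal C := RingHom.ker φ.rangeRestrict with hm
  haveI hmmax : m.IsMaximal := RingHom.ker_isMaximal_of_surjective φ.rangeRestrict hsurj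
  have hker : ∀ c ∈ m, φ.toRingHom c = 0 := by
    intro c hc
    have h0 : φ.rangeRestrict c = 0 := hc
    have : (φ.rangeRestrict c : AlgebraicClosure K) = φ c := rfl
    rw [h0] at this
    exact this.symm
  have hinj : Function.Injective (algebraMap C A) := Subtype.val_injective
  haveI : Algebra.IsIntegral C A :=
    ⟨fun a => IsIntegral.tower_top (R := K) (Algebra.IsIntegral.isIntegral a)⟩
  obtain ⟨Q, hQmax, hQcomap⟩ := Ideal.exists_ideal_over_maximal_of_isIntegral (R := C) (S := A) m
    (by rw [(RingHom.injective_iff_ker_eq_bot _).mp hinj]; exact bot_le)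
  haveI := hQmax
  letI : Field (C ⧸ m) := Ideal.Quotient.field m
  letI : Field (A ⧸ Q) := Ideal.Quotient.field Q
  have hle : m ≤ Ideal.comap (algebraMap C A) Q := le_of_eq hQcomap.symm
  set qm : (C ⧸ m) →+* (A ⧸ Q) := Ideal.quotientMap Q (algebraMap C A) hle with hqm
  letI : Algebra (C ⧸ m) (A ⧸ Q) := qm.toAlgebra
  haveI : IsScalarTower K (C ⧸ m) (A ⧸ Q) := IsScalarTower.of_algebraMap_eq (fun k => by
    have h1 : algebraMap K (C ⧸ m) k = Ideal.Quotient.mk m (algebraMap K C k) :=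
      ((Ideal.Quotient.mkₐ K m).commutes k).symm
    have h2 : algebraMap K (A ⧸ Q) k = Ideal.Quotient.mk Q (algebraMap K A k) :=
      ((Ideal.Quotient.mkₐ K Q).commutes k).symm
    rw [h1, h2]
    show Ideal.Quotient.mk Q (algebraMap K A k) = qm (Ideal.Quotient.mk m (algebraMap K C k))
    rw [hqm, Ideal.quotientMap_mk, ← IsScalarTower.algebraMap_apply])
  set lft : (C ⧸ m) →+* AlgebraicClosure K := Ideal.Quotient.lift m φ.toRingHom hker with hlft
  letI : Algebra (C ⧸ m) (AlgebraicClosure K) := lft.toAlgebra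
  haveI : IsScalarTower K (C ⧸ m) (AlgebraicClosure K) := IsScalarTower.of_algebraMap_eq
    (fun k => by
      have h1 : algebraMap K (C ⧸ m) k = Ideal.Quotient.mk m (algebraMap K C k) :=
        ((Ideal.Quotient.mkₐ K m).commutes k).symm
      rw [h1]
      show algebraMap K (AlgebraicClosure K) k
        = lft (Ideal.Quotient.mk m (algebraMap K C k))
      rw [hlft, Ideal.Quotient.lift_mk]
      exact (φ.commutes k).symm)
  haveI : Module.IsTorsionFree (C ⧸ m) (A ⧸ Q) :=
    Module.isTorsionFree_iff_algebraMap_injective.mpr (qm.injective)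
  haveI : Module.IsTorsionFree (C ⧸ m) (AlgebraicClosure K) :=
    Module.isTorsionFree_iff_algebraMap_injective.mpr (lft.injective)
  haveI : Module.Finite K (A ⧸ Q) := finiteDimensional_quot K A Q
  haveI : Module.Finite (C ⧸ m) (A ⧸ Q) :=
    Module.Finite.of_restrictScalars_finite K (C ⧸ m) (A ⧸ Q)
  haveI : Algebra.IsAlgebraic (C ⧸ m) (A ⧸ Q) := Algebra.IsAlgebraic.of_finite _ _
  let Φ₁ : (A ⧸ Q) →ₐ[C ⧸ m] AlgebraicClosure K := IsAlgClosed.lift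
  refine ⟨(Φ₁.restrictScalars K).comp (Ideal.Quotient.mkₐ K Q), ?_⟩
  ext c
  show Φ₁ (Ideal.Quotient.mk Q (C.val c)) = φ c
  have h1 : Ideal.Quotient.mk Q (C.val c) = algebraMap (C ⧸ m) (A ⧸ Q) (Ideal.Quotient.mk m c) := by
    show Ideal.Quotient.mk Q (C.val c) = qm (Ideal.Quotient.mk m c)
    rw [hqm, Ideal.quotientMap_mk]
    rfl
  rw [h1, Φ₁.commutes]
  show lft (Ideal.Quotient.mk m c) = φ c
  rw [hlft, Ideal.Quotient.lift_mk]
  rfl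

end Ext


section Sep

variable (K : Type u) [Field K]

lemma minpoly_separable (A : Type u) [CommRing A] [Algebra K A] [FiniteDimensional K A]
    [Algebra.Etale K A] (a : A) : (minpoly K a).Separable := by
  classical
  haveI : IsReduced A := Algebra.FormallyUnramified.isReduced_of_field K A
  letI := IsArtinianRing.of_finite K A
  haveI : Finite {I : Ideal A | I.IsMaximal} := (IsArtinianRing.setOfPred_isMaximal_finite A).to_subtype
  letI : Fintype {I : Ideal A | I.IsMaximal} := Fintype.ofFinite _
  haveI hFD : ∀ I : {I : Ideal A | I.IsMaximal}, Module.Finite K (A ⧸ I.1) :=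
    fun I => finiteDimensional_quot K A I.1
  haveI hsepQ : ∀ I : {I : Ideal A | I.IsMaximal}, Algebra.IsSeparable K (A ⧸ I.1) := fun I =>
    Algebra.FormallyUnramified.isSeparable K (A ⧸ I.1)
  set S : Finset (Polynomial K) :=
    Finset.image (fun I : {I : Ideal A | I.IsMaximal} =>
      minpoly K (Ideal.Quotient.mk I.1 a)) Finset.univ with hS
  have hprop : ∀ f ∈ S, f.Monic ∧ Irreducible f ∧ f.Separable := by
    intro f hf
    rw [hS, Finset.mem_image] at hf
    obtain ⟨I, -, rfl⟩ := hf
    have hint : IsIntegral K (Ideal.Quotient.mk I.1 a) := Algebra.IsIntegral.isIntegral _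
    exact ⟨minpoly.monic hint, minpoly.irreducible hint,
      Algebra.IsSeparable.isSeparable K (Ideal.Quotient.mk I.1 a)⟩
  have hg : (∏ f ∈ S, f).Separable := by
    apply Polynomial.separable_prod'
    · intro x hx y hy hxy
      obtain ⟨hxm, hxi, -⟩ := hprop x hx
      obtain ⟨hym, hyi, -⟩ := hprop y hy
      rw [Irreducible.coprime_iff_not_dvd hxi]
      intro hdvd
      exact hxy (Polynomial.eq_of_monic_of_associated hxm hym (hxi.associated_of_dvd hyi hdvd))
    · exact fun x hx => (hprop x hx).2.2
  have haeval : Polynomial.aeval a (∏ f ∈ S, f) = 0 := by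
    apply (piAlgEquiv K A).injective
    rw [map_zero]
    funext I
    rw [piAlgEquiv_apply]
    have h1 : Ideal.Quotient.mk I.1 (Polynomial.aeval a (∏ f ∈ S, f))
        = Polynomial.aeval (Ideal.Quotient.mk I.1 a) (∏ f ∈ S, f) := by
      have := Polynomial.aeval_algHom_apply (Ideal.Quotient.mkₐ K I.1) a (∏ f ∈ S, f)
      exact this.symm
    rw [h1, map_prod]
    refine Finset.prod_eq_zero (Finset.mem_image.mpr ⟨I, Finset.mem_univ I, rfl⟩) ?_
    exact minpoly.aeval K _
  exact hg.of_dvd (minpoly.dvd K a haeval)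

end Sep


section Separate

variable (K : Type u) [Field K]

lemma isReduced_subalgebra (A : Type u) [CommRing A] [Algebra K A] [IsReduced A]
    (B : Subalgebra K A) : IsReduced B := by
  constructor
  rintro ⟨x, hx⟩ ⟨n, hn⟩
  have hxA : (x : A) ^ n = 0 := by
    have := congrArg (Subtype.val : B → A) hn
    simpa using this
  have : x = 0 := IsNilpotent.eq_zero ⟨n, hxA⟩
  exact Subtype.ext this

lemma separate (A : Type u) [CommRing A] [Algebra K A] [FiniteDimensional K A]
    [IsReduced A] [Nontrivial A] (hsepA : ∀ a : A, (minpoly K a).Separable)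
    (B : Subalgebra K A) (a : A) (ha : a ∉ B) :
    ∃ Φ Ψ : A →ₐ[K] AlgebraicClosure K, Φ.comp B.val = Ψ.comp B.val ∧ Φ a ≠ Ψ a := by
  set B' : Subalgebra K A := Algebra.adjoin K (insert a (B : Set A)) with hB'
  have hBB' : B ≤ B' := by
    intro x hx
    exact Algebra.subset_adjoin (Set.mem_insert_of_mem a hx)
  have haB' : a ∈ B' := Algebra.subset_adjoin (Set.mem_insert a _)
  have hlt : B < B' := lt_of_le_of_ne hBB' (fun h => ha (h ▸ haB'))
  -- instances for the two subalgebras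
  haveI : IsReduced B := isReduced_subalgebra K A B
  haveI : IsReduced B' := isReduced_subalgebra K A B'
  have hsepB : ∀ c : B, (minpoly K c).Separable := fun c => by
    rw [← minpoly.algHom_eq B.val Subtype.val_injective]
    exact hsepA _
  have hsepB' : ∀ c : B', (minpoly K c).Separable := fun c => by
    rw [← minpoly.algHom_eq B'.val Subtype.val_injective]
    exact hsepA _
  have cB := card_algHom_eq_finrank K B hsepB
  have cB' := card_algHom_eq_finrank K B' hsepB'
  haveI : Nontrivial B := ⟨1, 0, fun h => one_ne_zero (α := A) (congrArg Subtype.val h)⟩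
  have hrk : finrank K B < finrank K B' := by
    have h1 : Subalgebra.toSubmodule B < Subalgebra.toSubmodule B' := by
      exact_mod_cast hlt
    exact Submodule.finrank_lt_finrank_of_lt h1
  haveI hfinB : Finite (B →ₐ[K] AlgebraicClosure K) := by
    have hpos : 0 < finrank K B := finrank_pos
    have : Nat.card (B →ₐ[K] AlgebraicClosure K) ≠ 0 := by rw [cB]; omega
    exact (Nat.card_ne_zero.mp this).2
  -- restriction map is not injective
  have hnotinj : ¬ Function.Injective
      (fun ψ : (B' →ₐ[K] AlgebraicClosure K) => ψ.comp (Subalgebra.inclusion hBB')) := by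
    intro hinj
    have hle := Nat.card_le_card_of_injective _ hinj
    rw [cB, cB'] at hle
    omega
  rw [Function.not_injective_iff] at hnotinj
  obtain ⟨φ', ψ', hres, hne⟩ := hnotinj
  obtain ⟨Φ, hΦ⟩ := exists_extension K A B' φ'
  obtain ⟨Ψ, hΨ⟩ := exists_extension K A B' ψ'
  have hagree : Φ.comp B.val = Ψ.comp B.val := by
    ext x
    have h1 : Φ (B.val x) = φ' (Subalgebra.inclusion hBB' x) := by
      have := congrArg (fun f : (B' →ₐ[K] AlgebraicClosure K) => f (Subalgebra.inclusion hBB' x)) hΦ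
      simpa using this
    have h2 : Ψ (B.val x) = ψ' (Subalgebra.inclusion hBB' x) := by
      have := congrArg (fun f : (B' →ₐ[K] AlgebraicClosure K) => f (Subalgebra.inclusion hBB' x)) hΨ
      simpa using this
    have h3 := congrArg (fun f : (B →ₐ[K] AlgebraicClosure K) => f x) hres
    show Φ (B.val x) = Ψ (B.val x)
    rw [h1, h2]
    exact h3
  refine ⟨Φ, Ψ, hagree, fun haa => ?_⟩
  have hB'eq : B' ≤ AlgHom.equalizer Φ Ψ := by
    rw [hB']
    apply Algebra.adjoin_le
    intro x hx
    rcases Set.mem_insert_iff.mp hx with h | h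
    · subst h; exact haa
    · have := congrArg (fun f : (B →ₐ[K] AlgebraicClosure K) => f ⟨x, h⟩) hagree
      simpa using this
  apply hne
  ext y
  have h1 : Φ (B'.val y) = φ' y := by
    have := congrArg (fun f : (B' →ₐ[K] AlgebraicClosure K) => f y) hΦ
    simpa using this
  have h2 : Ψ (B'.val y) = ψ' y := by
    have := congrArg (fun f : (B' →ₐ[K] AlgebraicClosure K) => f y) hΨ
    simpa using this
  have h3 : Φ (B'.val y) = Ψ (B'.val y) := hB'eq y.2
  rw [← h1, ← h2]
  exact h3

end Separate


section Final

variable (K : Type u) [Field K]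

lemma finite_subalgebra (A : Type u) [CommRing A] [Algebra K A] [FiniteDimensional K A]
    [IsReduced A] [Nontrivial A] (hsepA : ∀ a : A, (minpoly K a).Separable) :
    Finite (Subalgebra K A) := by
  haveI hfinH : Finite (A →ₐ[K] AlgebraicClosure K) := by
    have hc := card_algHom_eq_finrank K A hsepA
    have hpos : 0 < finrank K A := finrank_pos
    have : Nat.card (A →ₐ[K] AlgebraicClosure K) ≠ 0 := by rw [hc]; omega
    exact (Nat.card_ne_zero.mp this).2
  set H := A →ₐ[K] AlgebraicClosure K
  have hinj : Function.Injective (fun B : Subalgebra K A =>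
      ({p | p.1.comp B.val = p.2.comp B.val} : Set (H × H))) := by
    have haux : ∀ B₁ B₂ : Subalgebra K A,
        ({p : H × H | p.1.comp B₁.val = p.2.comp B₁.val} : Set (H × H))
          = {p : H × H | p.1.comp B₂.val = p.2.comp B₂.val} → B₂ ≤ B₁ := by
      intro B₁ B₂ hset a ha
      by_contra hnot
      obtain ⟨Φ, Ψ, hag, hne⟩ := separate K A hsepA B₁ a hnot
      have hmem : (⟨Φ, Ψ⟩ : H × H) ∈
          ({p : H × H | p.1.comp B₁.val = p.2.comp B₁.val} : Set (H × H)) := hag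
      rw [hset] at hmem
      have : Φ.comp B₂.val = Ψ.comp B₂.val := hmem
      have := congrArg (fun f : (B₂ →ₐ[K] AlgebraicClosure K) => f ⟨a, ha⟩) this
      exact hne (by simpa using this)
    intro B₁ B₂ h
    exact le_antisymm (haux B₂ B₁ h.symm) (haux B₁ B₂ h)
  exact Finite.of_injective _ hinj

lemma finite_ideal_pi {ι : Type u} [Finite ι] (F : ι → Type u) [∀ i, Field (F i)] :
    Finite (Ideal (∀ i, F i)) := by
  classical
  letI : Fintype ι := Fintype.ofFinite ι
  have key : ∀ (I : Ideal (∀ i, F i)) (x : ∀ i, F i),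
      x ∈ I ↔ ∀ i, x i ≠ 0 → (Pi.single i 1 : ∀ i, F i) ∈ I := by
    intro I x
    constructor
    · intro hx i hxi
      have heq : (Pi.single i (x i)⁻¹ : ∀ i, F i) * x = Pi.single i 1 := by
        funext j
        obtain rfl | h := eq_or_ne j i
        · simp [inv_mul_cancel₀ hxi]
        · simp [Pi.single_eq_of_ne h]
      have := I.mul_mem_left (Pi.single i (x i)⁻¹) hx
      rwa [heq] at this
    · intro h
      have hx : x = ∑ i, Pi.single i (x i) := (Finset.univ_sum_single x).symm
      rw [hx]
      refine Submodule.sum_mem I fun i _ => ?_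
      by_cases hxi : x i = 0
      · rw [hxi, Pi.single_zero]; exact I.zero_mem
      · have heq : (x * Pi.single i 1 : ∀ i, F i) = Pi.single i (x i) := by
          funext j
          obtain rfl | hj := eq_or_ne j i
          · simp
          · simp [Pi.single_eq_of_ne hj]
        rw [← heq]
        exact I.mul_mem_left x (h i hxi)
  have hinj : Function.Injective (fun I : Ideal (∀ i, F i) =>
      ({i | (Pi.single i 1 : ∀ i, F i) ∈ I} : Set ι)) := by
    intro I₁ I₂ h
    ext x
    rw [key I₁ x, key I₂ x]
    have hiff : ∀ i, ((Pi.single i 1 : ∀ i, F i) ∈ I₁ ↔ (Pi.single i 1 : ∀ i, F i) ∈ I₂) :=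
      fun i => Set.ext_iff.mp h i
    constructor
    · intro hh i hi; exact (hiff i).mp (hh i hi)
    · intro hh i hi; exact (hiff i).mpr (hh i hi)
  exact Finite.of_injective _ hinj

lemma finite_ideal (A : Type u) [CommRing A] [Algebra K A] [FiniteDimensional K A]
    [IsReduced A] : Finite (Ideal A) := by
  letI := IsArtinianRing.of_finite K A
  haveI : Finite {I : Ideal A | I.IsMaximal} := (IsArtinianRing.setOfPred_isMaximal_finite A).to_subtype
  have e := piAlgEquiv K A
  haveI hfin : Finite (Ideal (∀ I : {I : Ideal A | I.IsMaximal}, A ⧸ I.1)) :=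
    finite_ideal_pi (fun I : {I : Ideal A | I.IsMaximal} => A ⧸ I.1)
  set g : (∀ I : {I : Ideal A | I.IsMaximal}, A ⧸ I.1) →+* A :=
    e.symm.toAlgHom.toRingHom with hg
  have gsurj : Function.Surjective g := e.symm.surjective
  have hinj : Function.Injective (fun I : Ideal A => Ideal.comap g I) := by
    intro I₁ I₂ h
    have h2 := congrArg (Ideal.map g) h
    rwa [Ideal.map_comap_of_surjective g gsurj, Ideal.map_comap_of_surjective g gsurj] at h2
  exact Finite.of_injective _ hinj

end Final

end EtaleFIP

/-- A finite-dimensional étale algebra over a field has finitely many intermediate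
`K`-subalgebras and finitely many ideals. -/
theorem etale_over_field_fip_and_fmir
    (K A : Type u) [Field K] [CommRing A] [Algebra K A]
    [FiniteDimensional K A] [Algebra.Etale K A] :
    Finite (Subalgebra K A) ∧ Finite (Ideal A) := by
  rcases subsingleton_or_nontrivial A with hsub | hnt
  · constructor
    · haveI : Subsingleton (Subalgebra K A) :=
        ⟨fun B C => SetLike.ext fun x => by
          rw [Subsingleton.elim x 0]
          simp [zero_mem]⟩
      infer_instance
    · haveI : Subsingleton (Ideal A) := inferInstance
      infer_instance
  · haveI : IsReduced A := Algebra.FormallyUnramified.isReduced_of_field K A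
    have hsepA : ∀ a : A, (minpoly K a).Separable := EtaleFIP.minpoly_separable K A
    exact ⟨EtaleFIP.finite_subalgebra K A hsepA, EtaleFIP.finite_ideal K A⟩
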